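/- Let G = (V, E) be a finite simple graph and k ∈ ℕ. Let E'' ⊆ E be a set of edges such that for every S ⊆ V with |S| ≤ 2k, S is a vertex cover of (V, E) if and only if S is a vertex cover of (V, E''). Let V' be the set of endpoints of edges in E'' and let E' = {e ∈ E : both endpoints of e lie in V'}. Then G has an edge dominating set of size at most k if and only if the graph G' = (V', E') has an edge dominating set of size at most k. -/

import Mathlib

/-- **Correctness of the Edge Dominating Set kernelization (Lemma 10).** Let `(V, E)` be a
finite simple graph and `E'' ⊆ E` such that every vertex set of size at most `2k` is a
vertex cover of `(V, E)` iff it is a vertex cover of `(V, E'')`. Let `V'` be the set of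
endpoints of edges of `E''` and `E'` the set of edges of `E` with both endpoints in `V'`.
Then `(V, E)` has an edge dominating set of size at most `k` iff `(V', E')` does. -/
theorem edgeDominatingSet_kernel_correct {V : Type*} [DecidableEq V]
    (E : Finset (Sym2 V)) (hsimple : ∀ e ∈ E, ¬ e.IsDiag) (k : ℕ)
    (E'' : Finset (Sym2 V)) (hsub : E'' ⊆ E)
    (hvc : ∀ S : Finset V, S.card ≤ 2 * k →
      ((∀ e ∈ E, ∃ v ∈ S, v ∈ e) ↔ (∀ e ∈ E'', ∃ v ∈ S, v ∈ e)))
    (V' : Finset V) (hV' : ∀ v, v ∈ V' ↔ ∃ e ∈ E'', v ∈ e)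
    (E' : Finset (Sym2 V)) (hE' : ∀ e, e ∈ E' ↔ e ∈ E ∧ ∀ v ∈ e, v ∈ V') :
    (∃ S ⊆ E, S.card ≤ k ∧ ∀ e ∈ E, e ∉ S → ∃ f ∈ S, ∃ v, v ∈ e ∧ v ∈ f) ↔
    (∃ S ⊆ E', S.card ≤ k ∧ ∀ e ∈ E', e ∉ S → ∃ f ∈ S, ∃ v, v ∈ e ∧ v ∈ f) := by
  classical
  have hE''sub : E'' ⊆ E' := by
    intro g hg
    rw [hE']
    exact ⟨hsub hg, fun v hv => (hV' v).2 ⟨g, hg, hv⟩⟩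
  have hmem_out : ∀ (e : Sym2 V) (v : V), v ∈ e → v = e.out.1 ∨ v = e.out.2 := by
    intro e v hv
    have : e = Sym2.mk e.out.1 e.out.2 := (Quot.out_eq e).symm
    rw [this, Sym2.mem_iff] at hv
    exact hv
  constructor
  · rintro ⟨S, hSE, hScard, hSdom⟩
    -- replacement function
    set r : Sym2 V → Sym2 V := fun f =>
      if f ∈ E' then f
      else if h : ∃ g, g ∈ E' ∧ ∃ v, v ∈ f ∧ v ∈ g then h.choose else f with hr
    refine ⟨(S.image r).filter (· ∈ E'), ?_, ?_, ?_⟩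
    · intro e he; exact (Finset.mem_filter.1 he).2
    · exact le_trans (Finset.card_le_card (Finset.filter_subset _ _))
        (le_trans (Finset.card_image_le) hScard)
    · intro e heE' heS
      have heE : e ∈ E := ((hE' e).1 heE').1
      have heV' : ∀ v ∈ e, v ∈ V' := ((hE' e).1 heE').2
      by_cases heS0 : e ∈ S
      · exfalso
        apply heS
        refine Finset.mem_filter.2 ⟨Finset.mem_image.2 ⟨e, heS0, ?_⟩, heE'⟩
        simp [hr, heE']
      · obtain ⟨f, hfS, v, hve, hvf⟩ := hSdom e heE heS0
        have hvV' : v ∈ V' := heV' v hve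
        obtain ⟨g'', hg''E'', hvg''⟩ := (hV' v).1 hvV'
        have hg''E' : g'' ∈ E' := hE''sub hg''E''
        by_cases hfE' : f ∈ E'
        · refine ⟨f, Finset.mem_filter.2 ⟨Finset.mem_image.2 ⟨f, hfS, ?_⟩, hfE'⟩, v, hve, hvf⟩
          simp [hr, hfE']
        · have hex : ∃ g, g ∈ E' ∧ ∃ v, v ∈ f ∧ v ∈ g := ⟨g'', hg''E', v, hvf, hvg''⟩
          have hrf : r f = hex.choose := by simp [hr, hfE', hex]
          obtain ⟨hgE', w, hwf, hwg⟩ := hex.choose_spec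
          -- w must equal v
          have hfE : f ∈ E := hSE hfS
          have hwv : w = v := by
            by_contra hne
            -- then both endpoints of f in V', so f ∈ E'
            apply hfE'
            rw [hE']
            refine ⟨hfE, ?_⟩
            intro u huf
            rcases hmem_out f u huf with h1 | h1 <;>
            rcases hmem_out f v hvf with h2 | h2 <;>
            rcases hmem_out f w hwf with h3 | h3 <;>
              first
                | (exact h1 ▸ h2 ▸ hvV')
                | (exact (hgE' |> (hE' _).1).2 w hwg |>.rec (h1 ▸ h3 ▸ ((hE' _).1 hgE').2 w hwg))
                | (exact absurd (h3.trans h2.symm) hne)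
                | (exact h1 ▸ h3 ▸ ((hE' _).1 hgE').2 w hwg)
          refine ⟨hex.choose, Finset.mem_filter.2 ⟨Finset.mem_image.2 ⟨f, hfS, hrf⟩, hgE'⟩,
            v, hve, hwv ▸ hwg⟩
  · rintro ⟨S, hSE', hScard, hSdom⟩
    have hSE : S ⊆ E := fun e he => ((hE' e).1 (hSE' he)).1
    refine ⟨S, hSE, hScard, ?_⟩
    -- endpoint set
    set T : Finset V := S.biUnion (fun e => {e.out.1, e.out.2}) with hT
    have hTcard : T.card ≤ 2 * k := by
      calc T.card ≤ ∑ e ∈ S, ({e.out.1, e.out.2} : Finset V).card := Finset.card_biUnion_le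
        _ ≤ ∑ _e ∈ S, 2 := Finset.sum_le_sum (fun e _ => Finset.card_insert_le _ _ |>.trans (by simp))
        _ = 2 * S.card := by rw [Finset.sum_const, smul_eq_mul, mul_comm]
        _ ≤ 2 * k := by omega
    have hTdomS : ∀ v (f : Sym2 V), f ∈ S → v ∈ f → v ∈ T := by
      intro v f hf hv
      refine Finset.mem_biUnion.2 ⟨f, hf, ?_⟩
      rcases hmem_out f v hv with h | h <;> simp [h]
    have hTE'' : ∀ e ∈ E'', ∃ v ∈ T, v ∈ e := by
      intro g hg
      by_cases hgS : g ∈ S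
      · exact ⟨g.out.1, hTdomS _ g hgS (Sym2.out_fst_mem g), Sym2.out_fst_mem g⟩
      · obtain ⟨f, hfS, v, hvg, hvf⟩ := hSdom g (hE''sub hg) hgS
        exact ⟨v, hTdomS v f hfS hvf, hvg⟩
    have hTE : ∀ e ∈ E, ∃ v ∈ T, v ∈ e := (hvc T hTcard).2 hTE''
    intro e heE heS
    obtain ⟨v, hvT, hve⟩ := hTE e heE
    obtain ⟨f, hfS, hvf⟩ := Finset.mem_biUnion.1 hvT
    have : v ∈ f := by
      rcases Finset.mem_insert.1 hvf with h | h
      · exact h ▸ Sym2.out_fst_mem f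
      · exact (Finset.mem_singleton.1 h) ▸ Sym2.out_snd_mem f
    exact ⟨f, hfS, v, hve, this⟩
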